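/- Let Y₀, …, Y_{k-1} be independent geometric random variables where Y_t has success probability p_t ∈ (0,1], and let p* := min_t p_t, Y := Σ_t Y_t, μ := E[Y]. Then for any 0 < λ ≤ 1, Pr[Y ≤ λμ] ≤ exp(−p*·μ·(λ − 1 − ln λ)). -/

import Mathlib

open MeasureTheory ProbabilityTheory

lemma janson_geom_aux {Ω : Type*} [MeasurableSpace Ω] (μ : Measure Ω) [IsProbabilityMeasure μ]
    (X : Ω → ℕ) (hX : Measurable X)
    (h0 : μ {ω | X ω = 0} = 0)
    (c : ℕ → ℝ) (hc : ∀ j, 0 ≤ c j)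
    (h : ∀ j : ℕ, 1 ≤ j → μ {ω | X ω = j} = ENNReal.ofReal (c j))
    (g : ℕ → ℝ) (hg : ∀ j, 0 ≤ g j)
    (hsum : Summable (fun j : ℕ => g (j+1) * c (j+1))) :
    Integrable (fun ω => g (X ω)) μ ∧
      ∫ ω, g (X ω) ∂μ = ∑' j : ℕ, g (j+1) * c (j+1) := by
  have hmeas : Measurable fun ω => g (X ω) := (measurable_from_nat).comp hX
  have hmap : ∀ j : ℕ, (μ.map X) {j} = μ {ω | X ω = j} := by
    intro j
    rw [Measure.map_apply hX (measurableSet_singleton j)]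
    rfl
  have hl : ∫⁻ ω, ENNReal.ofReal (g (X ω)) ∂μ
      = ∑' j : ℕ, ENNReal.ofReal (g j) * μ {ω | X ω = j} := by
    rw [← lintegral_map (f := fun j => ENNReal.ofReal (g j)) measurable_from_nat hX,
      lintegral_countable']
    simp_rw [hmap]
  have hshift : ∑' j : ℕ, ENNReal.ofReal (g j) * μ {ω | X ω = j}
      = ∑' j : ℕ, ENNReal.ofReal (g (j+1) * c (j+1)) := by
    rw [tsum_eq_zero_add' ENNReal.summable, h0, mul_zero, zero_add]
    congr 1
    funext j
    rw [h (j+1) (by omega), ← ENNReal.ofReal_mul (hg _)]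
  have hl2 : ∫⁻ ω, ENNReal.ofReal (g (X ω)) ∂μ
      = ENNReal.ofReal (∑' j : ℕ, g (j+1) * c (j+1)) := by
    rw [hl, hshift, ENNReal.ofReal_tsum_of_nonneg (fun n => mul_nonneg (hg _) (hc _)) hsum]
  have hint : Integrable (fun ω => g (X ω)) μ := by
    refine ⟨hmeas.aestronglyMeasurable, ?_⟩
    rw [hasFiniteIntegral_iff_ofReal (ae_of_all _ fun ω => hg _), hl2]
    exact ENNReal.ofReal_lt_top
  refine ⟨hint, ?_⟩
  rw [integral_eq_lintegral_of_nonneg_ae (ae_of_all _ fun ω => hg _)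
    hmeas.aestronglyMeasurable, hl2,
    ENNReal.toReal_ofReal (tsum_nonneg fun j => mul_nonneg (hg _) (hc _))]

lemma janson_mono_aux {a b x : ℝ} (ha : 0 < a) (hab : a ≤ b) (hx : 0 ≤ x) :
    a * Real.log (1 + x / a) ≤ b * Real.log (1 + x / b) := by
  have hb : 0 < b := ha.trans_le hab
  have h1 : 1 + x / b ≤ (1 + x / b) := le_refl _
  have hxb : 0 ≤ x / b := div_nonneg hx hb.le
  have hbern : 1 + x / a ≤ (1 + x / b) ^ (b / a) := by
    have := one_add_mul_self_le_rpow_one_add (s := x / b) (by linarith)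
      (p := b / a) ((one_le_div ha).mpr hab)
    have he : b / a * (x / b) = x / a := by field_simp
    rwa [he] at this
  have hpos : (0:ℝ) < 1 + x / b := by positivity
  have hlog : Real.log (1 + x / a) ≤ (b / a) * Real.log (1 + x / b) := by
    calc Real.log (1 + x / a) ≤ Real.log ((1 + x / b) ^ (b / a)) :=
          Real.log_le_log (by positivity) hbern
      _ = (b / a) * Real.log (1 + x / b) := Real.log_rpow hpos _
  calc a * Real.log (1 + x / a) ≤ a * ((b / a) * Real.log (1 + x / b)) := by
        exact mul_le_mul_of_nonneg_left hlog ha.le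
    _ = b * Real.log (1 + x / b) := by field_simp

lemma janson_geom_mean {Ω : Type*} [MeasurableSpace Ω] (μ : Measure Ω) [IsProbabilityMeasure μ]
    (X : Ω → ℕ) (hX : Measurable X)
    (P : ℝ) (hP0 : 0 < P) (hP1 : P ≤ 1)
    (h0 : μ {ω | X ω = 0} = 0)
    (h : ∀ j : ℕ, 1 ≤ j → μ {ω | X ω = j} = ENNReal.ofReal ((1 - P) ^ (j-1) * P)) :
    Integrable (fun ω => (X ω : ℝ)) μ ∧ ∫ ω, (X ω : ℝ) ∂μ = 1 / P := by
  set q : ℝ := 1 - P with hqdef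
  have hq0 : 0 ≤ q := by simp [hqdef]; linarith
  have hq1 : q < 1 := by simp [hqdef]; linarith
  have hqn : ‖q‖ < 1 := by rwa [Real.norm_eq_abs, abs_of_nonneg hq0]
  have S1 : Summable fun j : ℕ => (j:ℝ) * q^j := by
    simpa using summable_pow_mul_geometric_of_norm_lt_one 1 hqn
  have S2 : Summable fun j : ℕ => q^j := summable_geometric_of_norm_lt_one hqn
  have hsum : Summable (fun j : ℕ => ((j+1:ℕ):ℝ) * ((1-P)^((j+1)-1) * P)) := by
    refine (((S1.add S2).mul_right P).congr fun j => ?_)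
    push_cast
    simp only [Nat.add_sub_cancel, ← hqdef]
    ring
  have key := janson_geom_aux μ X hX h0 (fun j => (1-P)^(j-1) * P)
    (fun j => mul_nonneg (pow_nonneg (by linarith) _) hP0.le) h
    (fun j => (j:ℝ)) (fun j => Nat.cast_nonneg j) hsum
  refine ⟨key.1, ?_⟩
  rw [key.2]
  have ht : ∑' j : ℕ, ((j+1:ℕ):ℝ) * ((1-P)^((j+1)-1) * P)
      = ∑' j : ℕ, ((j:ℝ) * q^j * P + q^j * P) := by
    congr 1; funext j; push_cast
    simp only [Nat.add_sub_cancel, ← hqdef]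
    ring
  rw [ht, Summable.tsum_add (S1.mul_right P) (S2.mul_right P), tsum_mul_right, tsum_mul_right,
    tsum_coe_mul_geometric_of_norm_lt_one hqn, tsum_geometric_of_lt_one hq0 hq1]
  have hPq : 1 - q = P := by simp [hqdef]
  rw [hPq]
  field_simp
  ring

lemma janson_geom_mgf {Ω : Type*} [MeasurableSpace Ω] (μ : Measure Ω) [IsProbabilityMeasure μ]
    (X : Ω → ℕ) (hX : Measurable X)
    (P : ℝ) (hP0 : 0 < P) (hP1 : P ≤ 1)
    (h0 : μ {ω | X ω = 0} = 0)
    (h : ∀ j : ℕ, 1 ≤ j → μ {ω | X ω = j} = ENNReal.ofReal ((1 - P) ^ (j-1) * P))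
    (r : ℝ) (hr0 : 0 < r) (hr1 : r ≤ 1) :
    Integrable (fun ω => r ^ (X ω)) μ ∧
      ∫ ω, r ^ (X ω) ∂μ = r * P * (1 - (1-P)*r)⁻¹ := by
  set q : ℝ := 1 - P with hqdef
  have hq0 : 0 ≤ q := by simp [hqdef]; linarith
  have hq1 : q < 1 := by simp [hqdef]; linarith
  have hqr0 : 0 ≤ q * r := mul_nonneg hq0 hr0.le
  have hqr1 : q * r < 1 :=
    lt_of_le_of_lt (by nlinarith : q * r ≤ q) hq1
  have S : Summable fun j : ℕ => (r * P) * (q*r)^j :=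
    (summable_geometric_of_lt_one hqr0 hqr1).mul_left _
  have hsum : Summable (fun j : ℕ => r^(j+1) * ((1-P)^((j+1)-1) * P)) := by
    refine S.congr fun j => ?_
    simp only [Nat.add_sub_cancel, ← hqdef, mul_pow, pow_succ]
    ring
  have key := janson_geom_aux μ X hX h0 (fun j => (1-P)^(j-1) * P)
    (fun j => mul_nonneg (pow_nonneg (by linarith) _) hP0.le) h
    (fun j => r ^ j) (fun j => pow_nonneg hr0.le j) hsum
  refine ⟨key.1, ?_⟩
  rw [key.2]
  have ht : ∑' j : ℕ, r^(j+1) * ((1-P)^((j+1)-1) * P)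
      = ∑' j : ℕ, (r * P) * (q*r)^j := by
    congr 1; funext j
    simp only [Nat.add_sub_cancel, ← hqdef, mul_pow, pow_succ]
    ring
  rw [ht, tsum_mul_left, tsum_geometric_of_lt_one hqr0 hqr1]

/-- Janson's lower-tail bound for sums of independent geometric random variables:
if `Y₀, …, Y_{k-1}` are independent, `Y_t` geometric with parameter `p_t ∈ (0,1]`
(values in `{1,2,…}` with `Pr[Y_t = j] = (1-p_t)^{j-1}·p_t`), `p* = min_t p_t`,
`Y = Σ_t Y_t` and `μ* = E[Y]`, then for `0 < λ ≤ 1`,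
`Pr[Y ≤ λ·μ*] ≤ exp(−p*·μ*·(λ − 1 − ln λ))`. -/
theorem janson_geometric_lower_tail {Ω : Type*} [MeasurableSpace Ω]
    (μ : Measure Ω) [IsProbabilityMeasure μ]
    (k : ℕ) (hk : 0 < k)
    (Y : Fin k → Ω → ℕ) (hY : ∀ t, Measurable (Y t))
    (hindep : iIndepFun Y μ)
    (p : Fin k → ℝ) (hp : ∀ t, p t ∈ Set.Ioc (0 : ℝ) 1)
    (hgeom : ∀ t, ∀ j : ℕ, 1 ≤ j →
      μ {ω | Y t ω = j} = ENNReal.ofReal ((1 - p t) ^ (j - 1) * p t))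
    (hgeom0 : ∀ t, μ {ω | Y t ω = 0} = 0)
    (pstar : ℝ) (hpstar : IsLeast {x | ∃ t, p t = x} pstar)
    (μE : ℝ) (hμE : μE = ∫ ω, (∑ t, (Y t ω : ℝ)) ∂μ)
    (lam : ℝ) (hlam : 0 < lam) (hlam1 : lam ≤ 1) :
    μ {ω | (∑ t, (Y t ω : ℝ)) ≤ lam * μE} ≤
      ENNReal.ofReal (Real.exp (-(pstar * μE * (lam - 1 - Real.log lam)))) := by
  obtain ⟨⟨t₀, ht₀⟩, hlb⟩ := hpstar
  have hps0 : 0 < pstar := ht₀ ▸ (hp t₀).1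
  have hps1 : pstar ≤ 1 := ht₀ ▸ (hp t₀).2
  have hple : ∀ t, pstar ≤ p t := fun t => hlb ⟨t, rfl⟩
  -- the parameters of the Chernoff argument
  set x : ℝ := pstar * (1 - lam) / lam with hxdef
  have hx0 : 0 ≤ x := by
    have h1 : (0:ℝ) ≤ 1 - lam := by linarith
    positivity
  have h1x : (0:ℝ) < 1 + x := by linarith
  set s : ℝ := Real.log (1 + x) with hsdef
  have hs0 : 0 ≤ s := Real.log_nonneg (by linarith)
  have hsx : s ≤ x := by
    have := Real.log_le_sub_one_of_pos h1x
    linarith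
  set r : ℝ := (1+x)⁻¹ with hrdef
  have hr0 : 0 < r := by positivity
  have hr1 : r ≤ 1 := by
    rw [hrdef]
    exact inv_le_one_of_one_le₀ (by linarith)
  have hes : Real.exp (-s) = r := by
    rw [hrdef, hsdef, Real.exp_neg, Real.exp_log h1x]
  -- per-variable integrals
  have hmean := fun t => janson_geom_mean μ (Y t) (hY t) (p t) (hp t).1 (hp t).2
    (hgeom0 t) (hgeom t)
  have hmgf := fun t => janson_geom_mgf μ (Y t) (hY t) (p t) (hp t).1 (hp t).2
    (hgeom0 t) (hgeom t) r hr0 hr1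
  have hμE' : μE = ∑ t, 1 / p t := by
    rw [hμE, integral_finset_sum _ (fun t _ => (hmean t).1)]
    exact Finset.sum_congr rfl fun t _ => (hmean t).2
  have hμE0 : 0 ≤ μE := by
    rw [hμE']
    exact Finset.sum_nonneg fun t _ => le_of_lt (div_pos one_pos (hp t).1)
  -- mgf of each summand
  have hexp_pow : ∀ n : ℕ, Real.exp (-s * n) = r ^ n := fun n => by
    rw [mul_comm, Real.exp_nat_mul, hes]
  have hmgf_eq : ∀ t, mgf (fun ω => (Y t ω : ℝ)) μ (-s)
      = r * p t * (1 - (1 - p t) * r)⁻¹ := by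
    intro t
    rw [mgf, ← (hmgf t).2]
    exact integral_congr_ae (ae_of_all _ fun ω => hexp_pow (Y t ω))
  -- per-term bound
  have hterm : ∀ t, r * p t * (1 - (1 - p t) * r)⁻¹
      ≤ Real.exp (pstar / p t * Real.log lam) := by
    intro t
    have hP0 : 0 < p t := (hp t).1
    have hP1 : p t ≤ 1 := (hp t).2
    have hxP : 0 < x + p t := by linarith
    have hd : 1 - (1 - p t) * r = (x + p t) * r := by
      rw [hrdef]
      field_simp
      ring
    have h1 : r * p t * (1 - (1 - p t) * r)⁻¹ = p t / (x + p t) := by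
      rw [hd, mul_inv]
      field_simp
    have h2 : 1 + x / pstar = lam⁻¹ := by
      rw [hxdef]
      field_simp
      ring
    have hloglam : Real.log lam = -Real.log (1 + x / pstar) := by
      rw [h2, Real.log_inv, neg_neg]
    have hPx : (0:ℝ) < 1 + x / p t := by positivity
    have h3 : p t / (x + p t) = Real.exp (-Real.log (1 + x / p t)) := by
      rw [Real.exp_neg, Real.exp_log hPx, one_add_div hP0.ne', inv_div, add_comm]
    have hm := janson_mono_aux hps0 (hple t) hx0
    rw [h1, h3]
    apply Real.exp_le_exp.mpr
    rw [hloglam, div_mul_eq_mul_div, le_div_iff₀ hP0]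
    nlinarith [hm]
  -- realify and use independence
  have hZm : ∀ t, Measurable (fun ω => (Y t ω : ℝ)) :=
    fun t => measurable_from_nat.comp (hY t)
  have hindepZ : iIndepFun (fun t (ω : Ω) => (Y t ω : ℝ)) μ :=
    hindep.comp (fun _ (n : ℕ) => (n : ℝ)) (fun _ => measurable_from_nat)
  have hXeq : (fun ω => ∑ t, (Y t ω : ℝ)) = ∑ t, fun ω => (Y t ω : ℝ) := by
    funext ω
    simp [Finset.sum_apply]
  have hXm : Measurable fun ω => ∑ t, (Y t ω : ℝ) :=
    Finset.measurable_sum Finset.univ fun t _ => hZm t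
  have hXnn : ∀ ω, 0 ≤ ∑ t, (Y t ω : ℝ) :=
    fun ω => Finset.sum_nonneg fun t _ => Nat.cast_nonneg _
  have hint : Integrable (fun ω => Real.exp (-s * ∑ t, (Y t ω : ℝ))) μ := by
    refine Integrable.mono' (integrable_const 1)
      ((hXm.const_mul (-s)).exp).aestronglyMeasurable (ae_of_all _ fun ω => ?_)
    rw [Real.norm_eq_abs, abs_of_nonneg (Real.exp_pos _).le]
    apply Real.exp_le_one_iff.mpr
    have := mul_nonneg hs0 (hXnn ω)
    nlinarith
  have hch := measure_le_le_exp_mul_mgf (μ := μ) (X := fun ω => ∑ t, (Y t ω : ℝ))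
    (lam * μE) (t := -s) (by linarith) hint
  have hmgfsum : mgf (fun ω => ∑ t, (Y t ω : ℝ)) μ (-s)
      = ∏ t, mgf (fun ω => (Y t ω : ℝ)) μ (-s) := by
    rw [hXeq]
    exact hindepZ.mgf_sum hZm Finset.univ
  have hprod : ∏ t, mgf (fun ω => (Y t ω : ℝ)) μ (-s)
      ≤ Real.exp (pstar * μE * Real.log lam) := by
    have h4 : ∏ t, mgf (fun ω => (Y t ω : ℝ)) μ (-s)
        ≤ ∏ t, Real.exp (pstar / p t * Real.log lam) :=
      Finset.prod_le_prod (fun t _ => mgf_nonneg) (fun t _ => by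
        rw [hmgf_eq t]; exact hterm t)
    refine h4.trans_eq ?_
    rw [← Real.exp_sum]
    congr 1
    rw [hμE', Finset.mul_sum, Finset.sum_mul]
    exact Finset.sum_congr rfl fun t _ => by ring
  have hslam : s * (lam * μE) ≤ pstar * (1 - lam) * μE := by
    have hxl : x * lam = pstar * (1 - lam) := by
      rw [hxdef]; field_simp
    have : s * lam ≤ x * lam := mul_le_mul_of_nonneg_right hsx hlam.le
    nlinarith
  have hfinal : (μ {ω | (∑ t, (Y t ω : ℝ)) ≤ lam * μE}).toReal
      ≤ Real.exp (-(pstar * μE * (lam - 1 - Real.log lam))) := by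
    calc (μ {ω | (∑ t, (Y t ω : ℝ)) ≤ lam * μE}).toReal
        ≤ Real.exp (-(-s) * (lam * μE)) * mgf (fun ω => ∑ t, (Y t ω : ℝ)) μ (-s) := hch
      _ ≤ Real.exp (s * (lam * μE)) * Real.exp (pstar * μE * Real.log lam) := by
          rw [neg_neg, hmgfsum]
          exact mul_le_mul_of_nonneg_left hprod (Real.exp_pos _).le
      _ = Real.exp (s * (lam * μE) + pstar * μE * Real.log lam) := (Real.exp_add _ _).symm
      _ ≤ Real.exp (-(pstar * μE * (lam - 1 - Real.log lam))) := by
          apply Real.exp_le_exp.mpr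
          nlinarith [hslam]
  calc μ {ω | (∑ t, (Y t ω : ℝ)) ≤ lam * μE}
      = ENNReal.ofReal ((μ {ω | (∑ t, (Y t ω : ℝ)) ≤ lam * μE}).toReal) :=
        (ENNReal.ofReal_toReal (measure_ne_top μ _)).symm
    _ ≤ ENNReal.ofReal (Real.exp (-(pstar * μE * (lam - 1 - Real.log lam)))) :=
        ENNReal.ofReal_le_ofReal hfinal
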